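/- arXiv:0810.4569 — 5 statements merged into one kernel-verified Lean document; each statement's English description precedes it below -/
import Mathlib

section
/- Let A be a finite-dimensional ℚ-algebra and let Γ₁ and Γ₂ be two ℤ-orders in A. Then the unit group Γ₁ˣ contains a subgroup isomorphic to ℤ × ℤ if and only if Γ₂ˣ contains a subgroup isomorphic to ℤ × ℤ. (Hence the hyperbolic property can be verified on a single ℤ-order.) -/
/-- A `ℤ`-order in a finite-dimensional `ℚ`-algebra `A`: a subring of `A`
(hence containing `1`) that is finitely generated as a `ℤ`-module and
spans `A` over `ℚ`. -/
def IsZOrder (A : Type*) [Ring A] [Algebra ℚ A] (Γ : Subring A) : Prop :=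
  Γ.toAddSubgroup.FG ∧ Submodule.span ℚ (Γ : Set A) = ⊤

/-- A group `G` contains a subgroup isomorphic to `ℤ × ℤ`, i.e. there is an
injective group homomorphism `Multiplicative (ℤ × ℤ) →* G`. -/
def HasZxZ (G : Type*) [Group G] : Prop :=
  ∃ f : Multiplicative (ℤ × ℤ) →* G, Function.Injective f

lemma aux_nsmul (A : Type*) [Ring A] [Algebra ℚ A] (Γ : Subring A)
    (x : A) (hx : x ∈ Submodule.span ℚ (Γ : Set A)) :
    ∃ k : ℕ, 0 < k ∧ k • x ∈ Γ := by
  induction hx using Submodule.span_induction with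
  | mem x h => exact ⟨1, one_pos, by simpa using h⟩
  | zero => exact ⟨1, one_pos, by simpa using Γ.zero_mem⟩
  | add x y _ _ hx hy =>
    obtain ⟨k, hk, hkx⟩ := hx
    obtain ⟨l, hl, hly⟩ := hy
    refine ⟨k * l, Nat.mul_pos hk hl, ?_⟩
    rw [smul_add, show k * l = l * k from mul_comm _ _, mul_smul, mul_comm l k, mul_smul]
    exact Γ.toAddSubgroup.add_mem (AddSubgroup.nsmul_mem _ hkx l)
      (AddSubgroup.nsmul_mem _ hly k)
  | smul q x _ hx =>
    obtain ⟨k, hk, hkx⟩ := hx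
    refine ⟨q.den * k, Nat.mul_pos q.den_pos hk, ?_⟩
    have e1 : (q.den * k : ℕ) • (q • x) = (((q.den * k : ℕ) : ℚ) * q) • x := by
      rw [← Nat.cast_smul_eq_nsmul ℚ, smul_smul]
    have e2 : (((q.den * k : ℕ) : ℚ) * q) = ((q.num * k : ℤ) : ℚ) := by
      push_cast
      rw [mul_comm (q.den : ℚ) (k : ℚ), mul_assoc, mul_comm (q.den : ℚ) q,
        Rat.mul_den_eq_num, mul_comm]
    have e3 : ((q.num * k : ℤ) : ℚ) • x = (q.num * (k : ℤ)) • x := by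
      rw [Int.cast_smul_eq_zsmul]
    rw [e1, e2, e3, mul_smul, natCast_zsmul]
    exact AddSubgroup.zsmul_mem Γ.toAddSubgroup hkx q.num

lemma aux_m (A : Type*) [Ring A] [Algebra ℚ A] (Γ₁ Γ₂ : Subring A)
    (hfg : Γ₁.toAddSubgroup.FG) (hsp : Submodule.span ℚ (Γ₂ : Set A) = ⊤) :
    ∃ m : ℕ, 0 < m ∧ ∀ x ∈ Γ₁, m • x ∈ Γ₂ := by
  obtain ⟨S, hS⟩ := hfg
  have hx : ∀ s : A, s ∈ Submodule.span ℚ (Γ₂ : Set A) := by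
    rw [hsp]; exact fun s => trivial
  choose k hk hmem using fun s : S => aux_nsmul A Γ₂ s (hx s)
  refine ⟨∏ s ∈ S.attach, k s, Finset.prod_pos (fun s _ => hk s), ?_⟩
  set m := ∏ s ∈ S.attach, k s with hm
  have hTS : ∀ s ∈ S, m • s ∈ Γ₂ := by
    intro s hs
    obtain ⟨c, hc⟩ := Finset.dvd_prod_of_mem k (Finset.mem_attach S ⟨s, hs⟩)
    rw [← hm] at hc
    rw [hc, mul_comm, mul_smul]
    exact AddSubgroup.nsmul_mem Γ₂.toAddSubgroup (hmem ⟨s, hs⟩) c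
  intro x hxm
  have hx' : x ∈ AddSubgroup.closure (S : Set A) := by
    rw [hS]; exact hxm
  have hle : AddSubgroup.closure (S : Set A) ≤
      Γ₂.toAddSubgroup.comap (zsmulAddGroupHom (m : ℤ)) := by
    rw [AddSubgroup.closure_le]
    intro s hs
    rw [SetLike.mem_coe, AddSubgroup.mem_comap, zsmulAddGroupHom_apply, natCast_zsmul]
    exact hTS s hs
  have h2 := hle hx'
  rw [AddSubgroup.mem_comap, zsmulAddGroupHom_apply, natCast_zsmul] at h2
  exact h2

lemma hasZxZ_mono (A : Type*) [Ring A] [Algebra ℚ A]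
    (Γ₁ Γ₂ : Subring A) (h₁ : IsZOrder A Γ₁) (h₂ : IsZOrder A Γ₂)
    (hz : HasZxZ Γ₁ˣ) : HasZxZ Γ₂ˣ := by
  classical
  obtain ⟨f, hf⟩ := hz
  obtain ⟨m, hm0, hm⟩ := aux_m A Γ₁ Γ₂ h₁.1 h₂.2
  -- the subgroup of units of Γ₁ which, together with their inverses, lie in Γ₂
  set U : Subgroup Γ₁ˣ :=
    { carrier := {u | (((u : Γ₁) : A) ∈ Γ₂) ∧ ((((u⁻¹ : Γ₁ˣ) : Γ₁) : A) ∈ Γ₂)},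
      mul_mem' := by
        intro a b ha hb
        refine ⟨?_, ?_⟩
        · have := Γ₂.mul_mem ha.1 hb.1
          simpa using this
        · have := Γ₂.mul_mem hb.2 ha.2
          simpa [mul_inv_rev] using this
      one_mem' := by
        refine ⟨?_, ?_⟩ <;> simpa using Γ₂.one_mem
      inv_mem' := by
        intro a ha
        exact ⟨ha.2, by simpa using ha.1⟩ } with hUdef
  set G := Multiplicative (ℤ × ℤ)
  set H : Subgroup G := U.comap f with hH
  -- finiteness of Γ₁ / mΓ₁
  haveI hfgG : AddGroup.FG Γ₁ :=
    (AddGroup.fg_iff_addSubgroup_fg Γ₁.toAddSubgroup).mpr h₁.1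
  haveI : Module.Finite ℤ Γ₁ := Module.Finite.iff_addGroup_fg.mpr hfgG
  set N : Submodule ℤ Γ₁ :=
    LinearMap.range ((m : ℤ) • (LinearMap.id : Γ₁ →ₗ[ℤ] Γ₁)) with hN
  have htor : Module.IsTorsion ℤ (Γ₁ ⧸ N) := by
    intro x
    refine ⟨⟨(m : ℤ), mem_nonZeroDivisors_of_ne_zero
      (by exact_mod_cast hm0.ne')⟩, ?_⟩
    obtain ⟨y, rfl⟩ := Submodule.Quotient.mk_surjective N x
    rw [← Submodule.Quotient.mk_smul, Submodule.Quotient.mk_eq_zero]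
    exact ⟨y, rfl⟩
  haveI hQfin : Finite (Γ₁ ⧸ N) := Module.finite_of_fg_torsion _ htor
  -- the "congruence" map
  set c : G → Γ₁ ⧸ N := fun x => Submodule.Quotient.mk ((f x : Γ₁ˣ) : Γ₁) with hc
  have key : ∀ x y : G, c x = c y → x⁻¹ * y ∈ H := by
    intro x y hxy
    set u := f x with hu
    set v := f y with hv
    have hsub : ((u : Γ₁) - (v : Γ₁)) ∈ N := (Submodule.Quotient.eq N).mp hxy
    obtain ⟨w, hw⟩ := hsub
    have hw' : (m : ℤ) • (w : Γ₁) = (u : Γ₁) - (v : Γ₁) := hw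
    have hwA : (m : ℤ) • (w : A) = ((u : Γ₁) : A) - ((v : Γ₁) : A) := by
      exact_mod_cast congrArg Subtype.val hw'
    have hmem2 : ∀ z : Γ₁, ((((u⁻¹ : Γ₁ˣ) : Γ₁) : A) ∈ Γ₂ → True) := fun _ _ => trivial
    -- values in A
    have huinv : (((u⁻¹ : Γ₁ˣ) : Γ₁) : A) * ((u : Γ₁) : A) = 1 := by
      exact_mod_cast congrArg Subtype.val u.inv_mul
    have hvinv : (((v⁻¹ : Γ₁ˣ) : Γ₁) : A) * ((v : Γ₁) : A) = 1 := by
      exact_mod_cast congrArg Subtype.val v.inv_mul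
    have e₁ : (((u⁻¹ : Γ₁ˣ) : Γ₁) : A) * ((v : Γ₁) : A)
        = 1 - (m : ℤ) • ((((u⁻¹ : Γ₁ˣ) : Γ₁) : A) * (w : A)) := by
      have hstep : (m : ℤ) • ((((u⁻¹ : Γ₁ˣ) : Γ₁) : A) * (w : A))
          = (((u⁻¹ : Γ₁ˣ) : Γ₁) : A) * (((u : Γ₁) : A) - ((v : Γ₁) : A)) := by
        rw [← hwA, mul_smul_comm]
      rw [hstep, mul_sub, huinv, sub_sub_cancel]
    have e₂ : (((v⁻¹ : Γ₁ˣ) : Γ₁) : A) * ((u : Γ₁) : A)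
        = 1 + (m : ℤ) • ((((v⁻¹ : Γ₁ˣ) : Γ₁) : A) * (w : A)) := by
      have hstep : (m : ℤ) • ((((v⁻¹ : Γ₁ˣ) : Γ₁) : A) * (w : A))
          = (((v⁻¹ : Γ₁ˣ) : Γ₁) : A) * (((u : Γ₁) : A) - ((v : Γ₁) : A)) := by
        rw [← hwA, mul_smul_comm]
      rw [hstep, mul_sub, hvinv, add_sub_cancel]
    have hmm : ∀ z : Γ₁, (m : ℤ) • ((z : A) * (w : A)) ∈ Γ₂ := by
      intro z
      rw [natCast_zsmul]
      exact hm _ (Γ₁.mul_mem z.2 w.2)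
    have m1 : (((u⁻¹ * v : Γ₁ˣ) : Γ₁) : A) ∈ Γ₂ := by
      have : (((u⁻¹ * v : Γ₁ˣ) : Γ₁) : A)
          = (((u⁻¹ : Γ₁ˣ) : Γ₁) : A) * ((v : Γ₁) : A) := by push_cast; ring_nf
      rw [this, e₁]
      exact Γ₂.sub_mem Γ₂.one_mem (hmm ((u⁻¹ : Γ₁ˣ) : Γ₁))
    have m2 : ((((u⁻¹ * v)⁻¹ : Γ₁ˣ) : Γ₁) : A) ∈ Γ₂ := by
      have : ((((u⁻¹ * v)⁻¹ : Γ₁ˣ) : Γ₁) : A)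
          = (((v⁻¹ : Γ₁ˣ) : Γ₁) : A) * ((u : Γ₁) : A) := by
        rw [mul_inv_rev, inv_inv]; push_cast; ring_nf
      rw [this, e₂]
      exact Γ₂.add_mem Γ₂.one_mem (hmm ((v⁻¹ : Γ₁ˣ) : Γ₁))
    have : f (x⁻¹ * y) ∈ U := by
      rw [map_mul, map_inv, ← hu, ← hv]
      exact ⟨m1, m2⟩
    exact this
  -- H has finite index
  haveI hfin : Finite (G ⧸ H) := by
    have hinj : Function.Injective (fun z : G ⧸ H => c z.out) := by
      intro z₁ z₂ h
      have h2 := key _ _ h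
      rwa [← QuotientGroup.eq, QuotientGroup.out_eq', QuotientGroup.out_eq'] at h2
    exact Finite.of_injective _ hinj
  haveI : H.FiniteIndex := Subgroup.finiteIndex_of_finite_quotient
  set n := H.index with hn
  have hn0 : n ≠ 0 := Subgroup.FiniteIndex.index_ne_zero
  have hpow : ∀ x : G, x ^ n ∈ H := fun x => H.pow_index_mem x
  -- build the homomorphism into Γ₂ˣ
  have hUval : ∀ (u : Γ₁ˣ) (hu : u ∈ U),
      (((u : Γ₁) : A) ∈ Γ₂) ∧ ((((u⁻¹ : Γ₁ˣ) : Γ₁) : A) ∈ Γ₂) := fun u hu => hu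
  let φ : ∀ u : Γ₁ˣ, u ∈ U → Γ₂ˣ := fun u hu =>
    ⟨⟨((u : Γ₁) : A), (hUval u hu).1⟩, ⟨(((u⁻¹ : Γ₁ˣ) : Γ₁) : A), (hUval u hu).2⟩,
      (by
        apply Subtype.ext
        show ((u : Γ₁) : A) * (((u⁻¹ : Γ₁ˣ) : Γ₁) : A) = 1
        exact_mod_cast congrArg Subtype.val u.mul_inv),
      (by
        apply Subtype.ext
        show (((u⁻¹ : Γ₁ˣ) : Γ₁) : A) * ((u : Γ₁) : A) = 1
        exact_mod_cast congrArg Subtype.val u.inv_mul)⟩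
  refine ⟨{ toFun := fun x => φ (f (x ^ n)) (hpow x),
            map_one' := ?_, map_mul' := ?_ }, ?_⟩
  · apply Units.ext
    apply Subtype.ext
    show ((f (1 ^ n) : Γ₁ˣ) : Γ₁) = (1 : A)
    rw [one_pow, map_one]
    rfl
  · intro x y
    apply Units.ext
    apply Subtype.ext
    show (((f ((x * y) ^ n) : Γ₁ˣ) : Γ₁) : A)
      = (((f (x ^ n) : Γ₁ˣ) : Γ₁) : A) * (((f (y ^ n) : Γ₁ˣ) : Γ₁) : A)
    rw [mul_pow, map_mul]
    push_cast
    ring_nf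
  · intro x y hxy
    have hval : (((f (x ^ n) : Γ₁ˣ) : Γ₁) : A) = (((f (y ^ n) : Γ₁ˣ) : Γ₁) : A) :=
      congrArg (fun z : Γ₂ˣ => ((z : Γ₂) : A)) hxy
    have hfu : f (x ^ n) = f (y ^ n) := by
      apply Units.ext
      exact Subtype.ext hval
    have hxyp : x ^ n = y ^ n := hf hfu
    -- injectivity of n-th power on Multiplicative (ℤ × ℤ)
    have : n • (Multiplicative.toAdd x) = n • (Multiplicative.toAdd y) := by
      have := congrArg Multiplicative.toAdd hxyp
      simpa [toAdd_pow] using this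
    have h1 : (n : ℤ) * (Multiplicative.toAdd x).1 = (n : ℤ) * (Multiplicative.toAdd y).1 := by
      have := congrArg Prod.fst this
      simpa [nsmul_eq_mul] using this
    have h2 : (n : ℤ) * (Multiplicative.toAdd x).2 = (n : ℤ) * (Multiplicative.toAdd y).2 := by
      have := congrArg Prod.snd this
      simpa [nsmul_eq_mul] using this
    have hnZ : (n : ℤ) ≠ 0 := by exact_mod_cast hn0
    have : Multiplicative.toAdd x = Multiplicative.toAdd y :=
      Prod.ext (mul_left_cancel₀ hnZ h1) (mul_left_cancel₀ hnZ h2)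
    exact Multiplicative.toAdd.injective this


theorem order_independence_of_ZxZ (A : Type*) [Ring A] [Algebra ℚ A]
    [FiniteDimensional ℚ A] (Γ₁ Γ₂ : Subring A)
    (h₁ : IsZOrder A Γ₁) (h₂ : IsZOrder A Γ₂) :
    HasZxZ Γ₁ˣ ↔ HasZxZ Γ₂ˣ := by
  exact ⟨hasZxZ_mono A Γ₁ Γ₂ h₁ h₂, hasZxZ_mono A Γ₂ Γ₁ h₂ h₁⟩
end

section
/- Let A be a finite-dimensional ℚ-algebra with the hyperbolic property. Then the Jacobson radical J(A) has ℚ-dimension at most 1. -/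
/-- The hyperbolic property: no `ℤ`-order of `A` has a unit group containing `ℤ × ℤ`. -/
def HasHyperbolicProperty (A : Type*) [Ring A] [Algebra ℚ A] : Prop :=
  ∀ Γ : Subring A, IsZOrder A Γ → ¬ HasZxZ Γˣ

open Submodule Module

section Aux

variable {A : Type*} [Ring A] [Algebra ℚ A]

/-- The Jacobson radical, as a `ℚ`-submodule. -/
noncomputable def radW (A : Type*) [Ring A] [Algebra ℚ A] : Submodule ℚ A :=
  Submodule.restrictScalars ℚ (Ideal.jacobson (⊥ : Ideal A))

lemma radW_mem {x : A} : x ∈ radW A ↔ x ∈ Ideal.jacobson (⊥ : Ideal A) := Iff.rfl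

lemma radW_pow_succ_le (n : ℕ) : (radW A) ^ (n + 1) ≤ radW A := by
  induction n with
  | zero => rw [pow_one]
  | succ m ih =>
    rw [pow_succ]
    refine Submodule.mul_le.2 fun x _ y hy => ?_
    exact (Ideal.jacobson (⊥ : Ideal A)).mul_mem_left x (radW_mem.1 hy)

lemma radW_mulA (n : ℕ) (x : A) {y : A} (hy : y ∈ (radW A) ^ (n + 1)) :
    x * y ∈ (radW A) ^ (n + 1) := by
  rw [pow_succ'] at hy ⊢
  refine Submodule.mul_induction_on hy (fun w hw z hz => ?_) (fun a b ha hb => ?_)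
  · rw [← mul_assoc]
    exact Submodule.mul_mem_mul ((Ideal.jacobson (⊥ : Ideal A)).mul_mem_left x hw) hz
  · rw [mul_add]; exact add_mem ha hb

lemma radW_pow_le {a b : ℕ} (h1 : 1 ≤ a) (hab : a ≤ b) : (radW A) ^ b ≤ (radW A) ^ a := by
  obtain ⟨c, rfl⟩ := Nat.exists_eq_add_of_le hab
  rw [show a + c = c + a by ring, pow_add]
  obtain ⟨a', rfl⟩ := Nat.exists_eq_add_of_le h1
  refine Submodule.mul_le.2 fun x hx y hy => ?_
  rw [show 1 + a' = a' + 1 by ring] at hy ⊢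
  exact radW_mulA _ x hy

/-- Noncommutative Nakayama for the Jacobson radical. -/
lemma nakayama (S : Finset A)
    (h : Submodule.restrictScalars ℚ (Submodule.span A (S : Set A)) ≤
      radW A * Submodule.restrictScalars ℚ (Submodule.span A (S : Set A))) :
    Submodule.span A (S : Set A) = ⊥ := by
  classical
  induction S using Finset.induction with
  | empty => simpa using Submodule.span_empty
  | @insert a S _ ih =>
    have ha : a ∈ Submodule.span A (insert a (S : Set A)) :=
      Submodule.subset_span (Set.mem_insert _ _)
    have ha2 : a ∈ radW A * Submodule.restrictScalars ℚ (Submodule.span A (insert a (S : Set A))) := by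
      have := h (by simpa using ha)
      simpa using this
    have hdec : ∀ z ∈ radW A * Submodule.restrictScalars ℚ
        (Submodule.span A (insert a (S : Set A))),
        ∃ c m, c ∈ Ideal.jacobson (⊥ : Ideal A) ∧ m ∈ Submodule.span A (S : Set A) ∧
          z = c * a + m := by
      intro z hz
      refine Submodule.mul_induction_on hz (fun w hw n hn => ?_) ?_
      · rw [Submodule.restrictScalars_mem, Submodule.mem_span_insert] at hn
        obtain ⟨b, z', hz', rfl⟩ := hn
        refine ⟨w * b, w * z', ?_, ?_, ?_⟩
        · exact Ideal.mul_mem_right _ _ (radW_mem.1 hw)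
        · simpa [smul_eq_mul] using (Submodule.span A (S : Set A)).smul_mem w hz'
        · rw [smul_eq_mul, mul_add, mul_assoc]
      · rintro x y ⟨c, m, hc, hm, rfl⟩ ⟨c', m', hc', hm', rfl⟩
        refine ⟨c + c', m + m', add_mem hc hc', add_mem hm hm', by rw [add_mul]; abel⟩
    obtain ⟨c, m, hc, hm, heq⟩ := hdec a ha2
    have h1 : (1 - c) * a = m := by
      rw [sub_mul, one_mul]
      nth_rewrite 1 [heq]
      abel
    obtain ⟨r, hr⟩ := Ideal.exists_mul_sub_mem_of_sub_one_mem_jacobson (1 - c)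
      (by simpa using (Ideal.jacobson (⊥ : Ideal A)).neg_mem hc)
    rw [Ideal.mem_bot, sub_eq_zero] at hr
    have hra : a = r * m := by
      calc a = (r * (1 - c)) * a := by rw [hr, one_mul]
        _ = r * ((1 - c) * a) := by rw [mul_assoc]
        _ = r * m := by rw [h1]
    have haS : a ∈ Submodule.span A (S : Set A) := by
      rw [hra]
      simpa [smul_eq_mul] using (Submodule.span A (S : Set A)).smul_mem r hm
    have hspan : Submodule.span A (insert a (S : Set A)) = Submodule.span A (S : Set A) :=
      Submodule.span_insert_eq_span haS
    have := ih (by rw [← hspan]; simpa using h)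
    rw [Finset.coe_insert, hspan]
    exact this

lemma radW_pow_eq_bot [FiniteDimensional ℚ A] : ∃ n, 1 ≤ n ∧ (radW A) ^ n = ⊥ := by
  classical
  -- stabilization
  have hstab : ∃ n, 1 ≤ n ∧ (radW A) ^ (n + 1) = (radW A) ^ n := by
    by_contra hno
    push_neg at hno
    have hlt : ∀ n, 1 ≤ n →
        finrank ℚ ((radW A) ^ (n + 1) : Submodule ℚ A) < finrank ℚ ((radW A) ^ n : Submodule ℚ A) := by
      intro n hn
      exact Submodule.finrank_lt_finrank_of_lt
        (lt_of_le_of_ne (radW_pow_le hn (Nat.le_succ n)) (hno n hn))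
    have key : ∀ i : ℕ, finrank ℚ ((radW A) ^ (1 + i) : Submodule ℚ A) + i ≤
        finrank ℚ ((radW A) ^ 1 : Submodule ℚ A) := by
      intro i
      induction i with
      | zero => simp
      | succ j ihj =>
        have := hlt (1 + j) (by omega)
        have h2 : (1 + (j+1)) = (1 + j) + 1 := by ring
        rw [h2]
        omega
    have := key (finrank ℚ ((radW A) ^ 1 : Submodule ℚ A) + 1)
    omega
  obtain ⟨n, hn1, hstabn⟩ := hstab
  refine ⟨n, hn1, ?_⟩
  obtain ⟨S, hS⟩ : ∃ S : Finset A, Submodule.span ℚ (S : Set A) = (radW A) ^ n :=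
    (IsNoetherian.noetherian ((radW A) ^ n : Submodule ℚ A) : Submodule.FG _)
  obtain ⟨n', rfl⟩ := Nat.exists_eq_add_of_le hn1
  have hA1 : Submodule.restrictScalars ℚ (Submodule.span A (S : Set A)) = (radW A) ^ (1 + n') := by
    apply le_antisymm
    · intro x hx
      rw [Submodule.restrictScalars_mem] at hx
      induction hx using Submodule.span_induction with
      | mem y hy => exact hS ▸ Submodule.subset_span hy
      | zero => exact zero_mem _
      | add y z _ _ hy hz => exact add_mem hy hz
      | smul a y _ hy =>
        rw [smul_eq_mul]
        rw [show 1 + n' = n' + 1 by ring] at hy ⊢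
        exact radW_mulA n' a hy
    · rw [← hS]
      exact Submodule.span_le_restrictScalars ℚ A (S : Set A)
  have hnak := nakayama S ?_
  · rw [← hA1, hnak]
    simp
  · rw [hA1]
    have : radW A * (radW A) ^ (1 + n') = (radW A) ^ (1 + n') := by
      rw [← pow_succ']
      exact hstabn
    rw [this]

/-- clearing denominators of a rational. -/
lemma rat_denom_clear (q : ℚ) (m : ℤ) (h : (q.den : ℤ) ∣ m) : ∃ w : ℤ, (w : ℚ) = (m : ℚ) * q := by
  obtain ⟨e, he⟩ := h
  refine ⟨q.num * e, ?_⟩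
  have hd : ((q.den : ℚ)) ≠ 0 := by exact_mod_cast q.den_nz
  have hnum : (q.num : ℚ) = q * (q.den : ℚ) := by
    have h2 := Rat.num_div_den q
    rwa [div_eq_iff hd] at h2
  push_cast
  rw [he, hnum]
  push_cast
  ring

/-- Every finite-dimensional `ℚ`-algebra contains a `ℤ`-order. -/
lemma exists_zorder [FiniteDimensional ℚ A] : ∃ Γ : Subring A, IsZOrder A Γ := by
  classical
  set n := Module.finrank ℚ A with hn
  set b : Basis (Fin n) ℚ A := Module.finBasis ℚ A with hb
  set c : Fin n → Fin n → Fin n → ℚ := fun i j k => b.repr (b i * b j) k with hc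
  set d : ℕ := ∏ i : Fin n, ∏ j : Fin n, ∏ k : Fin n, (c i j k).den with hdd
  have hd0 : d ≠ 0 := by
    rw [hdd]
    have : 0 < ∏ i : Fin n, ∏ j : Fin n, ∏ k : Fin n, (c i j k).den :=
      Finset.prod_pos fun i _ => Finset.prod_pos fun j _ =>
        Finset.prod_pos fun k _ => (c i j k).pos
    omega
  have hd0' : (d : ℚ) ≠ 0 := Nat.cast_ne_zero.2 hd0
  have hdvd : ∀ i j k, ((c i j k).den : ℤ) ∣ (d : ℤ) := by
    intro i j k
    have h1 : (c i j k).den ∣ ∏ k' : Fin n, (c i j k').den :=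
      Finset.dvd_prod_of_mem _ (Finset.mem_univ k)
    have h2 : (∏ k' : Fin n, (c i j k').den) ∣ ∏ j' : Fin n, ∏ k' : Fin n, (c i j' k').den :=
      Finset.dvd_prod_of_mem _ (Finset.mem_univ j)
    have h3 : (∏ j' : Fin n, ∏ k' : Fin n, (c i j' k').den) ∣ d :=
      Finset.dvd_prod_of_mem _ (Finset.mem_univ i)
    exact_mod_cast (h1.trans h2).trans h3
  set g : Fin n → A := fun i => (d : ℚ) • b i with hg
  set M : AddSubgroup A := AddSubgroup.closure (insert 1 (Set.range g)) with hM
  have h1M : (1 : A) ∈ M := AddSubgroup.subset_closure (Set.mem_insert _ _)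
  have hgM : ∀ i, g i ∈ M := fun i =>
    AddSubgroup.subset_closure (Set.mem_insert_of_mem _ ⟨i, rfl⟩)
  have hgg : ∀ i j, g i * g j ∈ M := by
    intro i j
    have hexp : g i * g j = ∑ k, ((d : ℚ) * c i j k) • g k := by
      have e1 : g i * g j = ((d : ℚ) * (d : ℚ)) • (b i * b j) := by
        rw [hg]
        simp only [smul_mul_assoc, mul_smul_comm, smul_smul]
      rw [e1]
      conv_lhs => rw [← Basis.sum_repr b (b i * b j)]
      rw [Finset.smul_sum]
      refine Finset.sum_congr rfl fun k _ => ?_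
      rw [hg]
      simp only [smul_smul]
      ring_nf
      rfl
    rw [hexp]
    refine AddSubgroup.sum_mem M fun k _ => ?_
    obtain ⟨z, hz⟩ := rat_denom_clear (c i j k) (d : ℤ) (hdvd i j k)
    push_cast at hz
    rw [← hz, Int.cast_smul_eq_zsmul]
    exact AddSubgroup.zsmul_mem M (hgM k) z
  have hmul : ∀ x ∈ M, ∀ y ∈ M, x * y ∈ M := by
    intro x hx
    induction hx using AddSubgroup.closure_induction with
    | mem x hxk =>
      rcases hxk with h1 | ⟨i, rfl⟩
      · intro y hy; rw [h1, one_mul]; exact hy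
      · intro y hy
        induction hy using AddSubgroup.closure_induction with
        | mem y hyk =>
          rcases hyk with h1 | ⟨j, rfl⟩
          · rw [h1, mul_one]; exact hgM i
          · exact hgg i j
        | zero => rw [mul_zero]; exact M.zero_mem
        | add y z hy hz ihy ihz => rw [mul_add]; exact M.add_mem ihy ihz
        | neg y hy ihy => rw [mul_neg]; exact M.neg_mem ihy
    | zero => intro y hy; rw [zero_mul]; exact M.zero_mem
    | add x x' hx hx' ihx ihx' => intro y hy; rw [add_mul]; exact M.add_mem (ihx y hy) (ihx' y hy)
    | neg x hx ihx => intro y hy; rw [neg_mul]; exact M.neg_mem (ihx y hy)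
  refine ⟨{ carrier := (M : Set A)
            mul_mem' := fun {x y} hx hy => hmul x hx y hy
            one_mem' := h1M
            add_mem' := fun {x y} hx hy => M.add_mem hx hy
            zero_mem' := M.zero_mem
            neg_mem' := fun {x} hx => M.neg_mem hx }, ?_, ?_⟩
  · refine (AddSubgroup.fg_iff _).2 ⟨insert 1 (Set.range g), ?_, (Set.finite_range g).insert 1⟩
    ext x
    exact Iff.rfl
  · apply eq_top_iff.2
    have hbmem : ∀ i, b i ∈ Submodule.span ℚ ((M : Set A)) := by
      intro i
      have : b i = (d : ℚ)⁻¹ • g i := by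
        rw [hg]; rw [smul_smul, inv_mul_cancel₀ hd0', one_smul]
      rw [this]
      exact Submodule.smul_mem _ _ (Submodule.subset_span (hgM i))
    intro x _
    have hx : x ∈ Submodule.span ℚ (Set.range b) := by rw [b.span_eq]; trivial
    have hle : Submodule.span ℚ (Set.range b) ≤ Submodule.span ℚ ((M : Set A)) :=
      Submodule.span_le.2 (by rintro y ⟨i, rfl⟩; exact hbmem i)
    exact hle hx

/-- Denominator-clearing into an order. -/
lemma exists_int_smul_mem (Γ : Subring A) (hspan : Submodule.span ℚ (Γ : Set A) = ⊤) (a : A) :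
    ∃ z : ℤ, z ≠ 0 ∧ (z : ℚ) • a ∈ Γ := by
  classical
  have ha : a ∈ Submodule.span ℚ (Γ : Set A) := by rw [hspan]; trivial
  rw [mem_span_set'] at ha
  obtain ⟨k, f, gg, hsum⟩ := ha
  refine ⟨∏ i : Fin k, ((f i).den : ℤ), ?_, ?_⟩
  · refine Finset.prod_ne_zero_iff.2 fun i _ => ?_
    exact_mod_cast (f i).den_nz
  · set z : ℤ := ∏ i : Fin k, ((f i).den : ℤ) with hz
    have hzs : (z : ℚ) • a = ∑ i : Fin k, ((z : ℚ) * f i) • (gg i : A) := by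
      rw [← hsum, Finset.smul_sum]
      exact Finset.sum_congr rfl fun i _ => by rw [smul_smul]
    rw [hzs]
    refine sum_mem fun i _ => ?_
    have hdvd : ((f i).den : ℤ) ∣ z := Finset.dvd_prod_of_mem _ (Finset.mem_univ i)
    obtain ⟨w, hw⟩ := rat_denom_clear (f i) z hdvd
    rw [← hw, Int.cast_smul_eq_zsmul]
    exact AddSubgroup.zsmul_mem Γ.toAddSubgroup ((gg i).2) w

/-- The key unit-group construction. -/
lemma hasZxZ_of (Γ : Subring A) (s t : A) (hsΓ : s ∈ Γ) (htΓ : t ∈ Γ)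
    (indep : ∀ p q : ℚ, p • s + q • t = 0 → p = 0 ∧ q = 0)
    (hst : s * t = 0) (hts : t * s = 0) (htt : t * t = 0) (c : ℚ) (hss : s * s = c • t) :
    HasZxZ Γˣ := by
  classical
  have hsss : s * (s * s) = 0 := by rw [hss, mul_smul_comm, hst, smul_zero]
  have hsss' : (s * s) * s = 0 := by rw [hss, smul_mul_assoc, hts, smul_zero]
  have hsst : (s * s) * t = 0 := by rw [hss, smul_mul_assoc, htt, smul_zero]
  have hs4 : (s * s) * (s * s) = 0 := by
    rw [hss, smul_mul_assoc, mul_smul_comm, htt, smul_zero, smul_zero]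
  have pf1 : ((1 : A) + s) * (1 - s + s * s) = 1 := by
    have h : ((1 : A) + s) * (1 - s + s * s) = 1 + s * (s * s) := by noncomm_ring
    rw [h, hsss, add_zero]
  have pf2 : ((1 : A) - s + s * s) * (1 + s) = 1 := by
    have h : ((1 : A) - s + s * s) * (1 + s) = 1 + (s * s) * s := by noncomm_ring
    rw [h, hsss', add_zero]
  have pf3 : ((1 : A) + t) * (1 - t) = 1 := by
    have h : ((1 : A) + t) * (1 - t) = 1 - t * t := by noncomm_ring
    rw [h, htt, sub_zero]
  have pf4 : ((1 : A) - t) * (1 + t) = 1 := by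
    have h : ((1 : A) - t) * (1 + t) = 1 - t * t := by noncomm_ring
    rw [h, htt, sub_zero]
  set U : Aˣ := ⟨1 + s, 1 - s + s * s, pf1, pf2⟩ with hUdef
  set V : Aˣ := ⟨1 + t, 1 - t, pf3, pf4⟩ with hVdef
  have hUval : (U : A) = 1 + s := rfl
  have hUinv : ((U⁻¹ : Aˣ) : A) = 1 - s + s * s := rfl
  have hVval : (V : A) = 1 + t := rfl
  have hVinv : ((V⁻¹ : Aˣ) : A) = 1 - t := rfl
  -- multiplication rules
  have mulS : ∀ α β : ℚ, (1 + α • s + β • (s * s)) * (1 + s)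
      = 1 + (α + 1) • s + (β + α) • (s * s) := by
    intro α β
    rw [mul_add, mul_one, add_mul, add_mul, one_mul, smul_mul_assoc, smul_mul_assoc, hsss',
      smul_zero, add_zero]
    module
  have mulSinv : ∀ α β : ℚ, (1 + α • s + β • (s * s)) * (1 - s + s * s)
      = 1 + (α - 1) • s + (β - α + 1) • (s * s) := by
    intro α β
    rw [mul_add, mul_sub, mul_one, add_mul, add_mul, one_mul, smul_mul_assoc, smul_mul_assoc,
      hsss', smul_zero, add_zero, add_mul, add_mul, one_mul, smul_mul_assoc, smul_mul_assoc,
      hsss, hs4, smul_zero, smul_zero, add_zero, add_zero]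
    module
  have mulT : ∀ γ : ℚ, ((1 : A) + γ • t) * (1 + t) = 1 + (γ + 1) • t := by
    intro γ
    rw [mul_add, mul_one, add_mul, one_mul, smul_mul_assoc, htt, smul_zero, add_zero]
    module
  have mulTinv : ∀ γ : ℚ, ((1 : A) + γ • t) * (1 - t) = 1 + (γ - 1) • t := by
    intro γ
    rw [mul_sub, mul_one, add_mul, one_mul, smul_mul_assoc, htt, smul_zero, add_zero]
    module
  have mulST : ∀ α β γ : ℚ, (1 + α • s + β • (s * s)) * (1 + γ • t)
      = 1 + α • s + β • (s * s) + γ • t := by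
    intro α β γ
    rw [mul_add, mul_one, mul_smul_comm, add_mul, add_mul, one_mul, smul_mul_assoc,
      smul_mul_assoc, hst, hsst, smul_zero, smul_zero, add_zero, add_zero]
  have hU : ∀ a : ℤ, ((U ^ a : Aˣ) : A) =
      1 + (a : ℚ) • s + (((a : ℚ) * ((a : ℚ) - 1)) / 2) • (s * s) := by
    intro a
    induction a using Int.induction_on with
    | zero => norm_num
    | succ i ih =>
      rw [zpow_add_one, Units.val_mul, ih, hUval, mulS]
      push_cast
      module
    | pred i ih =>
      rw [show (-(i : ℤ) - 1) = (-(i : ℤ)) - 1 from rfl, zpow_sub_one, Units.val_mul, ih, hUinv,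
        mulSinv]
      push_cast
      module
  have hV : ∀ b : ℤ, ((V ^ b : Aˣ) : A) = 1 + (b : ℚ) • t := by
    intro b
    induction b using Int.induction_on with
    | zero => norm_num
    | succ i ih =>
      rw [zpow_add_one, Units.val_mul, ih, hVval, mulT]
      push_cast
      module
    | pred i ih =>
      rw [show (-(i : ℤ) - 1) = (-(i : ℤ)) - 1 from rfl, zpow_sub_one, Units.val_mul, ih, hVinv,
        mulTinv]
      push_cast
      module
  -- the units inside Γ
  have hsΓ1 : (1 : A) + s ∈ Γ := Γ.add_mem Γ.one_mem hsΓ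
  have hsΓ2 : (1 : A) - s + s * s ∈ Γ := Γ.add_mem (Γ.sub_mem Γ.one_mem hsΓ) (Γ.mul_mem hsΓ hsΓ)
  have htΓ1 : (1 : A) + t ∈ Γ := Γ.add_mem Γ.one_mem htΓ
  have htΓ2 : (1 : A) - t ∈ Γ := Γ.sub_mem Γ.one_mem htΓ
  set u : Γˣ := ⟨⟨1 + s, hsΓ1⟩, ⟨1 - s + s * s, hsΓ2⟩, Subtype.ext pf1, Subtype.ext pf2⟩
    with hudef
  set v : Γˣ := ⟨⟨1 + t, htΓ1⟩, ⟨1 - t, htΓ2⟩, Subtype.ext pf3, Subtype.ext pf4⟩ with hvdef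
  have hcomm : Commute u v := by
    show u * v = v * u
    apply Units.ext
    apply Subtype.ext
    show ((1 : A) + s) * (1 + t) = (1 + t) * (1 + s)
    have e1 : ((1 : A) + s) * (1 + t) = 1 + s + t + s * t := by noncomm_ring
    have e2 : ((1 : A) + t) * (1 + s) = 1 + s + t + t * s := by noncomm_ring
    rw [e1, e2, hst, hts]
  -- the group homomorphism
  set φ : Γ →* A := (Γ.subtype : Γ →+* A).toMonoidHom with hφ
  have hπu : Units.map φ u = U := Units.ext rfl
  have hπv : Units.map φ v = V := Units.ext rfl
  refine ⟨MonoidHom.mk' (fun p => u ^ (p.toAdd.1) * v ^ (p.toAdd.2)) ?_, ?_⟩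
  · intro p q
    show u ^ (p.toAdd.1 + q.toAdd.1) * v ^ (p.toAdd.2 + q.toAdd.2) = _
    rw [zpow_add, zpow_add]
    have hswap : v ^ (p.toAdd.2) * u ^ (q.toAdd.1) = u ^ (q.toAdd.1) * v ^ (p.toAdd.2) :=
      ((hcomm.zpow_zpow (q.toAdd.1) (p.toAdd.2))).eq.symm
    calc u ^ p.toAdd.1 * u ^ q.toAdd.1 * (v ^ p.toAdd.2 * v ^ q.toAdd.2)
        = u ^ p.toAdd.1 * (u ^ q.toAdd.1 * v ^ p.toAdd.2) * v ^ q.toAdd.2 := by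
          rw [mul_assoc, mul_assoc, mul_assoc]
      _ = u ^ p.toAdd.1 * (v ^ p.toAdd.2 * u ^ q.toAdd.1) * v ^ q.toAdd.2 := by rw [hswap]
      _ = u ^ p.toAdd.1 * v ^ p.toAdd.2 * (u ^ q.toAdd.1 * v ^ q.toAdd.2) := by
          rw [mul_assoc, mul_assoc, mul_assoc]
  · rw [injective_iff_map_eq_one]
    intro p hp
    have hp' : u ^ (p.toAdd.1) * v ^ (p.toAdd.2) = 1 := hp
    set a : ℤ := p.toAdd.1 with hadef
    set b : ℤ := p.toAdd.2 with hbdef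
    have hAeq : U ^ a * V ^ b = 1 := by
      have h2 := congrArg (Units.map φ) hp'
      rw [map_mul, map_zpow, map_zpow, hπu, hπv, map_one] at h2
      exact h2
    have hval : ((U ^ a * V ^ b : Aˣ) : A) = 1 := by rw [hAeq, Units.val_one]
    rw [Units.val_mul, hU, hV, mulST] at hval
    have hzero : (a : ℚ) • s + ((((a : ℚ) * ((a : ℚ) - 1)) / 2) * c + (b : ℚ)) • t = 0 := by
      have hval2 : (1 : A) + ((a : ℚ) • s + ((((a : ℚ) * ((a : ℚ) - 1)) / 2) * c + (b : ℚ)) • t)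
          = 1 + 0 := by
        calc (1 : A) + ((a : ℚ) • s + ((((a : ℚ) * ((a : ℚ) - 1)) / 2) * c + (b : ℚ)) • t)
            = 1 + (a : ℚ) • s + (((a : ℚ) * ((a : ℚ) - 1)) / 2) • (c • t) + (b : ℚ) • t := by
              rw [smul_smul]; module
          _ = 1 + (a : ℚ) • s + (((a : ℚ) * ((a : ℚ) - 1)) / 2) • (s * s) + (b : ℚ) • t := by
              rw [hss]
          _ = 1 := hval
          _ = 1 + 0 := by rw [add_zero]
      exact add_left_cancel hval2
    obtain ⟨h1, h2⟩ := indep _ _ hzero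
    have ha0 : a = 0 := by exact_mod_cast h1
    rw [h1] at h2
    norm_num at h2
    have hb0 : b = 0 := by exact_mod_cast h2
    have hpa : p.toAdd = ((0 : ℤ), (0 : ℤ)) := Prod.ext ha0 hb0
    exact Multiplicative.toAdd.injective hpa

lemma key_contradiction [FiniteDimensional ℚ A] (hA : HasHyperbolicProperty A) (s t : A)
    (indep : ∀ p q : ℚ, p • s + q • t = 0 → p = 0 ∧ q = 0)
    (hst : s * t = 0) (hts : t * s = 0) (htt : t * t = 0) (c : ℚ) (hss : s * s = c • t) :
    False := by
  obtain ⟨Γ, hΓ⟩ := exists_zorder (A := A)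
  obtain ⟨z, hz0, hzs⟩ := exists_int_smul_mem Γ hΓ.2 s
  obtain ⟨w, hw0, hwt⟩ := exists_int_smul_mem Γ hΓ.2 t
  have hzq : ((z : ℚ)) ≠ 0 := Int.cast_ne_zero.2 hz0
  have hwq : ((w : ℚ)) ≠ 0 := Int.cast_ne_zero.2 hw0
  set s' : A := (z : ℚ) • s with hs'
  set t' : A := (w : ℚ) • t with ht'
  have hst' : s' * t' = 0 := by
    rw [hs', ht', smul_mul_assoc, mul_smul_comm, hst, smul_zero, smul_zero]
  have hts' : t' * s' = 0 := by
    rw [hs', ht', smul_mul_assoc, mul_smul_comm, hts, smul_zero, smul_zero]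
  have htt' : t' * t' = 0 := by
    rw [ht', smul_mul_assoc, mul_smul_comm, htt, smul_zero, smul_zero]
  have hss' : s' * s' = ((z : ℚ) * (z : ℚ) * c / (w : ℚ)) • t' := by
    rw [hs', ht', smul_mul_assoc, mul_smul_comm, hss, smul_smul, smul_smul, smul_smul]
    congr 1
    field_simp
  have indep' : ∀ p q : ℚ, p • s' + q • t' = 0 → p = 0 ∧ q = 0 := by
    intro p q h
    rw [hs', ht', smul_smul, smul_smul] at h
    obtain ⟨h1, h2⟩ := indep _ _ h
    constructor
    · rcases mul_eq_zero.1 h1 with h | h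
      · exact h
      · exact absurd h hzq
    · rcases mul_eq_zero.1 h2 with h | h
      · exact h
      · exact absurd h hwq
  exact hA Γ hΓ (hasZxZ_of Γ s' t' hzs hwt indep' hst' hts' htt' _ hss')

end Aux

theorem jacobson_radical_dim_le_one_of_hyperbolic
    (A : Type*) [Ring A] [Algebra ℚ A] [FiniteDimensional ℚ A]
    (hA : HasHyperbolicProperty A) :
    Module.finrank ℚ (Submodule.restrictScalars ℚ ((⊥ : Ideal A).jacobson)) ≤ 1 := by
  by_contra hcon
  push_neg at hcon
  have hcon2 : 2 ≤ Module.finrank ℚ (radW A) := hcon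
  clear hcon
  rcases subsingleton_or_nontrivial A with hsub | hnt
  · have : Subsingleton (radW A) := ⟨fun a b => Subtype.ext (Subsingleton.elim _ _)⟩
    rw [Module.finrank_zero_of_subsingleton] at hcon2
    omega
  obtain ⟨n, hn1, hnbot⟩ := radW_pow_eq_bot (A := A)
  have hWbot : radW A ≠ ⊥ := by
    intro h
    rw [h, finrank_bot] at hcon2
    omega
  have hex : ∃ m, (radW A) ^ m = ⊥ := ⟨n, hnbot⟩
  classical
  set m0 := Nat.find hex with hm0def
  have hm0 : (radW A) ^ m0 = ⊥ := Nat.find_spec hex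
  have h0 : m0 ≠ 0 := by
    intro h
    rw [h, pow_zero] at hm0
    have h1 : (1 : A) ∈ (1 : Submodule ℚ A) := Submodule.one_le.mp le_rfl
    rw [hm0] at h1
    simp only [Submodule.mem_bot] at h1
    exact one_ne_zero h1
  have h1 : m0 ≠ 1 := by
    intro h
    rw [h, pow_one] at hm0
    exact hWbot hm0
  set k := m0 - 1 with hkdef
  have hk1 : 1 ≤ k := by omega
  have hkk : k + 1 = m0 := by omega
  have hktop : (radW A) ^ (k + 1) = ⊥ := by rw [hkk]; exact hm0
  have hkne : (radW A) ^ k ≠ ⊥ := Nat.find_min hex (by omega)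
  obtain ⟨t, htW, ht0⟩ := Submodule.exists_mem_ne_zero_of_ne_bot hkne
  have hspanle : Submodule.span ℚ {t} ≤ (radW A) ^ k :=
    Submodule.span_le.2 (Set.singleton_subset_iff.2 htW)
  have htt : t * t = 0 := by
    have h2 : t * t ∈ (radW A) ^ (k + k) := by
      rw [pow_add]; exact Submodule.mul_mem_mul htW htW
    have h3 := radW_pow_le (show 1 ≤ k + 1 by omega) (show k + 1 ≤ k + k by omega) h2
    rwa [hktop, Submodule.mem_bot] at h3
  -- a helper to conclude
  have main : ∀ s : A, s ∉ Submodule.span ℚ {t} →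
      s * t = 0 → t * s = 0 → (∃ c : ℚ, s * s = c • t) → False := by
    rintro s hs hst hts ⟨c, hss⟩
    have indep : ∀ p q : ℚ, p • s + q • t = 0 → p = 0 ∧ q = 0 := by
      intro p q h
      by_cases hp : p = 0
      · refine ⟨hp, ?_⟩
        rw [hp, zero_smul, zero_add] at h
        rcases smul_eq_zero.1 h with h | h
        · exact h
        · exact absurd h ht0
      · exfalso
        apply hs
        have h3 : p • s = -(q • t) := by rw [eq_neg_iff_add_eq_zero]; exact h
        have h2 : s = (p⁻¹ * (-q)) • t := by
          calc s = p⁻¹ • (p • s) := by rw [smul_smul, inv_mul_cancel₀ hp, one_smul]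
            _ = p⁻¹ • (-(q • t)) := by rw [h3]
            _ = (p⁻¹ * (-q)) • t := by rw [← smul_smul, neg_smul]
        rw [h2]
        exact Submodule.mem_span_singleton.2 ⟨_, rfl⟩
    exact key_contradiction hA s t indep hst hts htt c hss
  by_cases hc : (((radW A) ^ k : Submodule ℚ A) : Set A) ⊆ ((Submodule.span ℚ {t} : Submodule ℚ A) : Set A)
  · by_cases hk : k = 1
    · have hle : radW A ≤ Submodule.span ℚ {t} := by
        intro x hx
        apply hc
        rw [hk, pow_one]
        exact hx
      have hfr := Submodule.finrank_mono hle
      rw [finrank_span_singleton ht0] at hfr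
      omega
    · have hk2 : 2 ≤ k := by omega
      have hne : (radW A) ^ (k - 1) ≠ (radW A) ^ k := by
        intro h
        apply hkne
        have heq2 : (radW A) ^ (k + 1) = (radW A) ^ k := by
          calc (radW A) ^ (k + 1) = radW A * (radW A) ^ k := pow_succ' _ _
            _ = radW A * (radW A) ^ (k - 1) := by rw [h]
            _ = (radW A) ^ ((k - 1) + 1) := (pow_succ' _ _).symm
            _ = (radW A) ^ k := by congr 1; omega
        rw [← heq2]; exact hktop
      have hle2 : (radW A) ^ k ≤ (radW A) ^ (k - 1) := radW_pow_le (by omega) (by omega)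
      obtain ⟨s, hsW, hsk⟩ := SetLike.exists_of_lt (lt_of_le_of_ne hle2 (fun h => hne h.symm))
      have hsnot : s ∉ Submodule.span ℚ {t} := fun h => hsk (hspanle h)
      refine main s hsnot ?_ ?_ ?_
      · have h2 : s * t ∈ (radW A) ^ ((k - 1) + k) := by
          rw [pow_add]; exact Submodule.mul_mem_mul hsW htW
        have h3 := radW_pow_le (show 1 ≤ k + 1 by omega) (show k + 1 ≤ (k - 1) + k by omega) h2
        rwa [hktop, Submodule.mem_bot] at h3
      · have h2 : t * s ∈ (radW A) ^ (k + (k - 1)) := by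
          rw [pow_add]; exact Submodule.mul_mem_mul htW hsW
        have h3 := radW_pow_le (show 1 ≤ k + 1 by omega) (show k + 1 ≤ k + (k - 1) by omega) h2
        rwa [hktop, Submodule.mem_bot] at h3
      · have h2 : s * s ∈ (radW A) ^ ((k - 1) + (k - 1)) := by
          rw [pow_add]; exact Submodule.mul_mem_mul hsW hsW
        have h3 := radW_pow_le hk1 (show k ≤ (k - 1) + (k - 1) by omega) h2
        obtain ⟨c, hc'⟩ := Submodule.mem_span_singleton.1 (hc h3)
        exact ⟨c, hc'.symm⟩
  · obtain ⟨s, hsW, hsnot⟩ := Set.not_subset.1 hc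
    have hsW' : s ∈ (radW A) ^ k := hsW
    have hprod : ∀ x y : A, x ∈ (radW A) ^ k → y ∈ (radW A) ^ k → x * y = 0 := by
      intro x y hx hy
      have h2 : x * y ∈ (radW A) ^ (k + k) := by
        rw [pow_add]; exact Submodule.mul_mem_mul hx hy
      have h3 := radW_pow_le (show 1 ≤ k + 1 by omega) (show k + 1 ≤ k + k by omega) h2
      rwa [hktop, Submodule.mem_bot] at h3
    refine main s hsnot (hprod s t hsW' htW) (hprod t s htW hsW') ⟨0, ?_⟩
    rw [zero_smul]
    exact hprod s s hsW' hsW'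
end

section
/- Let A₁ and A₂ be finite-dimensional ℚ-algebras, each possessing a ℤ-order whose unit group is infinite. Then the direct product A₁ × A₂ does not have the hyperbolic property; explicitly, A₁ × A₂ has a ℤ-order whose unit group contains a subgroup isomorphic to ℤ × ℤ. -/
open Finset

private lemma key_zero {R : Type*} [Ring R] [Module.Finite ℤ R] [Module.Free ℤ R]
    [NoZeroSMulDivisors ℤ R] {p : ℕ} (hp : p.Prime) {x : R}
    (hx3 : ∃ a : R, x = (3:ℤ) • a) (hpow : (1 + x) ^ p = 1) : x = 0 := by
  classical
  by_contra hx0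
  set b := Module.Free.chooseBasis ℤ R with hb
  obtain ⟨i, hi⟩ : ∃ i, b.repr x i ≠ 0 := by
    by_contra h
    push_neg at h
    apply hx0
    have : b.repr x = 0 := Finsupp.ext h
    simpa using congrArg b.repr.symm this
  set P : ℕ → Prop := fun k => ∃ y : R, x = ((3:ℤ) ^ k) • y with hP
  set B := (b.repr x i).natAbs with hB
  have hBpos : 0 < B := Int.natAbs_pos.mpr hi
  have hbound : ∀ k, P k → k ≤ B := by
    rintro k ⟨y, hy⟩
    have h1 : ((3:ℤ) ^ k) ∣ b.repr x i := by
      refine ⟨b.repr y i, ?_⟩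
      rw [hy, map_smul]
      simp [smul_eq_mul]
    have h2 : 3 ^ k ∣ B := by
      have h2' := Int.natAbs_dvd_natAbs.mpr h1
      simpa [Int.natAbs_pow] using h2'
    have h3 : 3 ^ k ≤ B := Nat.le_of_dvd hBpos h2
    have h4 : k < 3 ^ k := Nat.lt_pow_self (by norm_num)
    omega
  have hP1 : P 1 := by obtain ⟨a, ha⟩ := hx3; exact ⟨a, by simpa using ha⟩
  obtain ⟨k, hk, hknot, hk1⟩ : ∃ k, P k ∧ ¬ P (k+1) ∧ 1 ≤ k := by
    refine ⟨Nat.findGreatest P B, Nat.findGreatest_spec hBpos hP1, ?_, Nat.le_findGreatest hBpos hP1⟩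
    intro h
    have := Nat.le_findGreatest (hbound _ h) h
    omega
  obtain ⟨m, rfl⟩ : ∃ m, k = m + 1 := ⟨k - 1, by omega⟩
  obtain ⟨y, hy⟩ := hk
  -- binomial expansion
  have hexp : ∑ j ∈ range (p+1), x ^ j * ((p.choose j : ℕ) : R) = 1 := by
    have h := (Commute.one_right x).add_pow p
    simp only [one_pow, mul_one] at h
    rw [add_comm] at hpow
    rw [← h, hpow]
  have hp2 : 2 ≤ p := hp.two_le
  have hsplit : range (p+1) = insert 0 (insert 1 (Ico 2 (p+1))) := by
    ext j
    simp only [Finset.mem_range, Finset.mem_insert, Finset.mem_Ico]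
    omega
  have h01 : (0:ℕ) ∉ insert 1 (Ico 2 (p+1)) := by simp
  have h1I : (1:ℕ) ∉ Ico 2 (p+1) := by simp
  rw [hsplit, Finset.sum_insert h01, Finset.sum_insert h1I] at hexp
  simp only [pow_zero, pow_one, Nat.choose_zero_right, Nat.choose_one_right, Nat.cast_one,
    one_mul] at hexp
  -- hexp : 1 + x * p + S = 1
  have hmain : x * (p:R) + ∑ j ∈ Ico 2 (p+1), x ^ j * ((p.choose j : ℕ) : R) = 0 := by
    apply add_left_cancel (a := (1:R))
    rw [add_zero]
    exact hexp
  set S := ∑ j ∈ Ico 2 (p+1), x ^ j * ((p.choose j : ℕ) : R) with hSdef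
  have hS : S = ((3:ℤ) ^ (2*(m+1))) • (∑ j ∈ Ico 2 (p+1),
      ((3:ℤ) ^ ((m+1)*j - 2*(m+1))) • (y ^ j * ((p.choose j : ℕ) : R))) := by
    rw [Finset.smul_sum]
    refine Finset.sum_congr rfl ?_
    intro j hj
    rw [Finset.mem_Ico] at hj
    have hxj : x ^ j = ((3:ℤ) ^ ((m+1)*j)) • y ^ j := by
      rw [hy, smul_pow, ← pow_mul]
    rw [hxj, smul_mul_assoc, smul_smul, ← pow_add]
    have haux : 2*(m+1) ≤ (m+1)*j := by
      have := Nat.mul_le_mul_left (m+1) hj.1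
      omega
    congr 2
    omega
  -- x * p = (p:ℤ) • x
  have hxp : x * (p:R) = (p:ℤ) • x := by
    rw [zsmul_eq_mul]
    push_cast
    exact ((Nat.cast_commute p x).eq.symm)
  rw [hxp, hS] at hmain
  by_cases hp3 : p = 3
  · -- p = 3 case
    subst hp3
    -- compute S explicitly? no: use hmain directly
    -- hmain : (3:ℤ) • x + 3^(2m+2) • z = 0
    set z := ∑ j ∈ Ico 2 (3+1), ((3:ℤ) ^ ((m+1)*j - 2*(m+1))) • (y ^ j * ((3:ℕ).choose j : R)) with hz
    -- (3:ℤ)•x = 3^(m+2) • y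
    have h1 : ((3:ℤ)) • x = ((3:ℤ)^(m+2)) • y := by
      rw [hy, smul_smul, ← pow_succ']
    -- 3^(2m+2) • z = 3^(m+2) • (3^m • z)
    have h2 : ((3:ℤ)^(2*(m+1))) • z = ((3:ℤ)^(m+2)) • (((3:ℤ)^m) • z) := by
      rw [smul_smul, ← pow_add]
      have : 2*(m+1) = m+2+m := by ring
      rw [this]
    have hc : ((3:ℕ):ℤ) = 3 := by norm_num
    rw [hc] at hmain
    rw [h1, h2, ← smul_add] at hmain
    have h3 : y + ((3:ℤ)^m) • z = 0 :=
      (smul_right_injective R (pow_ne_zero _ (by norm_num : (3:ℤ) ≠ 0))) (by simpa using hmain)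
    have hzval : z = (3:ℤ) • (y^2 + ((3:ℤ)^m) • y^3) := by
      have hIco : Ico 2 (3+1) = ({2, 3} : Finset ℕ) := by decide
      rw [hz, hIco, Finset.sum_pair (by norm_num : (2:ℕ) ≠ 3)]
      have e2 : (m+1)*2 - 2*(m+1) = 0 := by omega
      have e3 : (m+1)*3 - 2*(m+1) = m+1 := by omega
      rw [e2, e3, pow_zero, one_smul]
      have c2 : ((3:ℕ).choose 2 : R) = ((3:ℕ) : R) := by norm_num
      have c3 : ((3:ℕ).choose 3 : R) = 1 := by norm_num
      rw [c2, c3, mul_one]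
      have hy2 : y^2 * ((3:ℕ) : R) = (3:ℤ) • (y^2) := by
        rw [zsmul_eq_mul]
        push_cast
        exact (Nat.cast_commute 3 (y^2)).eq.symm
      rw [hy2, smul_add, smul_smul, ← pow_succ']
    have hy' : y = -(((3:ℤ)^m) • z) := eq_neg_of_add_eq_zero_left h3
    have h4 : y = (3:ℤ) • (-(((3:ℤ)^m) • (y^2 + ((3:ℤ)^m) • y^3))) := by
      nth_rewrite 1 [hy']
      rw [hzval, smul_smul, mul_comm ((3:ℤ)^m) 3, mul_smul, ← smul_neg]
    apply hknot
    apply Exists.intro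
    nth_rewrite 1 [hy]
    nth_rewrite 1 [h4]
    rw [smul_smul, ← pow_succ]
  · set z := ∑ j ∈ Ico 2 (p+1), ((3:ℤ) ^ ((m+1)*j - 2*(m+1))) • (y ^ j * ((p.choose j : ℕ) : R))
      with hz
    have h1 : (p:ℤ) • x = ((3:ℤ)^(m+1)) • ((p:ℤ) • y) := by rw [hy, smul_comm]
    have h2 : ((3:ℤ)^(2*(m+1))) • z = ((3:ℤ)^(m+1)) • (((3:ℤ)^(m+1)) • z) := by
      rw [smul_smul, ← pow_add]
      have : 2*(m+1) = (m+1)+(m+1) := by ring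
      rw [this]
    rw [h1, h2, ← smul_add] at hmain
    have h3 : (p:ℤ) • y + ((3:ℤ)^(m+1)) • z = 0 :=
      smul_right_injective R (pow_ne_zero _ (by norm_num : (3:ℤ) ≠ 0)) (by simpa using hmain)
    have hpy : (p:ℤ) • y = (3:ℤ) • (-(((3:ℤ)^m) • z)) := by
      have h5 : (p:ℤ) • y = -(((3:ℤ)^(m+1)) • z) := eq_neg_of_add_eq_zero_left h3
      rw [h5, pow_succ', mul_smul, smul_neg]
    have hcop : IsCoprime (p:ℤ) 3 := by
      rw [Int.isCoprime_iff_gcd_eq_one]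
      have hc := (Nat.coprime_primes hp (by norm_num : Nat.Prime 3)).mpr hp3
      unfold Nat.Coprime at hc
      simpa [Int.gcd] using hc
    obtain ⟨s, t, hst⟩ := hcop
    have hyw : y = (3:ℤ) • (s • (-(((3:ℤ)^m) • z)) + t • y) := by
      calc y = (s*(p:ℤ) + t*3) • y := by rw [hst, one_smul]
      _ = s • ((p:ℤ) • y) + (t*3) • y := by rw [add_smul, mul_smul]
      _ = s • ((3:ℤ) • (-(((3:ℤ)^m) • z))) + (3:ℤ) • (t • y) := by
          rw [hpy, mul_comm, mul_smul]
      _ = (3:ℤ) • (s • (-(((3:ℤ)^m) • z)) + t • y) := by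
          rw [smul_add, smul_comm s (3:ℤ)]
    apply hknot
    apply Exists.intro
    nth_rewrite 1 [hy]
    nth_rewrite 1 [hyw]
    rw [smul_smul, ← pow_succ]

private lemma pow_one_add_three {R : Type*} [Ring R] {u : Rˣ} {a : R}
    (h : (u:R) = 1 + (3:ℤ) • a) : ∀ m : ℕ, ∃ c : R, (u:R) ^ m = 1 + (3:ℤ) • c := by
  intro m
  induction m with
  | zero => exact ⟨0, by simp⟩
  | succ m ih =>
    obtain ⟨c, hc⟩ := ih
    refine ⟨c + ((u:R) ^ m) * a, ?_⟩
    rw [pow_succ, hc, h, mul_add, mul_one, mul_smul_comm, smul_add]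
    abel

private lemma unit_not_finOrder {R : Type*} [Ring R] [Module.Finite ℤ R] [Module.Free ℤ R]
    [NoZeroSMulDivisors ℤ R] {u : Rˣ} {a : R} (h : (u:R) = 1 + (3:ℤ) • a)
    (hne : u ≠ 1) : ¬ IsOfFinOrder u := by
  intro hfin
  have hn : 0 < orderOf u := hfin.orderOf_pos
  have hn1 : orderOf u ≠ 1 := by
    intro h1
    exact hne (orderOf_eq_one_iff.mp h1)
  have hp : (orderOf u).minFac.Prime := Nat.minFac_prime hn1
  have hdvd : (orderOf u).minFac ∣ orderOf u := Nat.minFac_dvd _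
  have hq : 0 < orderOf u / (orderOf u).minFac :=
    Nat.div_pos (Nat.minFac_le hn) hp.pos
  have hvp : (u ^ (orderOf u / (orderOf u).minFac)) ^ (orderOf u).minFac = 1 := by
    rw [← pow_mul, Nat.div_mul_cancel hdvd]
    exact pow_orderOf_eq_one u
  have hvne : u ^ (orderOf u / (orderOf u).minFac) ≠ 1 := by
    intro hv
    have h2 : orderOf u ∣ orderOf u / (orderOf u).minFac := orderOf_dvd_of_pow_eq_one hv
    have h3 : orderOf u / (orderOf u).minFac < orderOf u := Nat.div_lt_self hn hp.one_lt
    have := Nat.le_of_dvd hq h2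
    omega
  obtain ⟨c, hc⟩ := pow_one_add_three h (orderOf u / (orderOf u).minFac)
  have hxpow : ((1:R) + (3:ℤ) • c) ^ (orderOf u).minFac = 1 := by
    rw [← hc]
    have hval : ((u:R) ^ (orderOf u / (orderOf u).minFac)) ^ (orderOf u).minFac
        = (((u ^ (orderOf u / (orderOf u).minFac)) ^ (orderOf u).minFac : Rˣ) : R) := by
      push_cast
      rfl
    rw [hval, hvp, Units.val_one]
  have hz := key_zero hp ⟨c, rfl⟩ hxpow
  apply hvne
  ext
  rw [Units.val_one, Units.val_pow_eq_pow_val, hc, hz, add_zero]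

private lemma exists_unit_not_finOrder (R : Type*) [Ring R] [Module.Finite ℤ R]
    [Module.Free ℤ R] [NoZeroSMulDivisors ℤ R] [Infinite Rˣ] :
    ∃ u : Rˣ, ¬ IsOfFinOrder u := by
  classical
  set b := Module.Free.chooseBasis ℤ R with hb
  set φ : Rˣ → (Module.Free.ChooseBasisIndex ℤ R → ZMod 3) :=
    fun u i => ((b.repr (u:R) i : ℤ) : ZMod 3) with hφ
  obtain ⟨u, v, huv, he⟩ := Finite.exists_ne_map_eq_of_infinite φ
  have hdvd : ∀ i, (3:ℤ) ∣ b.repr ((u:R) - (v:R)) i := by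
    intro i
    rw [map_sub, Finsupp.sub_apply]
    have h0 : ((b.repr (u:R) i - b.repr (v:R) i : ℤ) : ZMod 3) = 0 := by
      push_cast
      have := congrFun he i
      rw [hφ] at this
      simp only at this
      rw [this]
      ring
    exact (ZMod.intCast_zmod_eq_zero_iff_dvd _ 3).mp h0
  set c : R := ∑ i, ((b.repr ((u:R) - (v:R)) i) / 3) • b i with hc
  have hd : (3:ℤ) • c = (u:R) - (v:R) := by
    rw [hc, Finset.smul_sum]
    have : ∀ i ∈ Finset.univ, (3:ℤ) • (((b.repr ((u:R) - (v:R)) i) / 3) • b i)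
        = (b.repr ((u:R) - (v:R)) i) • b i := by
      intro i _
      rw [smul_smul, Int.mul_ediv_cancel' (hdvd i)]
    rw [Finset.sum_congr rfl this, b.sum_repr]
  have hwne : u * v⁻¹ ≠ 1 := by
    intro h1
    exact huv (by rwa [mul_inv_eq_one] at h1)
  have hw : ((u * v⁻¹ : Rˣ) : R) = 1 + (3:ℤ) • (c * ((v⁻¹ : Rˣ) : R)) := by
    have h2 : ((u * v⁻¹ : Rˣ) : R) = (u:R) * ((v⁻¹ : Rˣ) : R) := by push_cast; rfl
    rw [h2, ← smul_mul_assoc, hd, sub_mul, Units.mul_inv]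
    abel
  exact ⟨u * v⁻¹, unit_not_finOrder hw hwne⟩

private lemma subring_exists_unit {A : Type*} [Ring A] [Algebra ℚ A] {Γ : Subring A}
    (hfg : Γ.toAddSubgroup.FG) (hinf : Infinite Γˣ) : ∃ u : Γˣ, ¬ IsOfFinOrder u := by
  have h1 : AddGroup.FG Γ := (AddGroup.fg_iff_addSubgroup_fg Γ.toAddSubgroup).mpr hfg
  haveI h2 : Module.Finite ℤ Γ := Module.Finite.iff_addGroup_fg.mpr h1
  haveI h3 : NoZeroSMulDivisors ℤ Γ := by
    constructor
    intro n x hnx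
    by_cases hn : n = 0
    · left; exact hn
    · right
      have hcoe : ((n • x : Γ) : A) = n • (x : A) := by
        exact AddSubgroupClass.coe_zsmul x n
      have h0 : n • (x:A) = 0 := by rw [← hcoe, hnx, ZeroMemClass.coe_zero]
      have h0' : ((n:ℚ)) • (x:A) = 0 := by rw [Int.cast_smul_eq_zsmul]; exact h0
      rcases smul_eq_zero.mp h0' with h | h
      · exact absurd (by exact_mod_cast h) hn
      · exact Subtype.ext (by rw [h]; rfl)
  haveI h4 : Module.Free ℤ Γ := Module.free_of_finite_type_torsion_free'
  exact exists_unit_not_finOrder Γ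

theorem product_of_algebras_with_infinite_units_not_hyperbolic
    (A₁ A₂ : Type*) [Ring A₁] [Algebra ℚ A₁] [FiniteDimensional ℚ A₁]
    [Ring A₂] [Algebra ℚ A₂] [FiniteDimensional ℚ A₂]
    (h₁ : ∃ Γ₁ : Subring A₁, IsZOrder A₁ Γ₁ ∧ Infinite Γ₁ˣ)
    (h₂ : ∃ Γ₂ : Subring A₂, IsZOrder A₂ Γ₂ ∧ Infinite Γ₂ˣ) :
    ¬ HasHyperbolicProperty (A₁ × A₂) ∧
      ∃ Γ : Subring (A₁ × A₂), IsZOrder (A₁ × A₂) Γ ∧ HasZxZ Γˣ := by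
  obtain ⟨Γ₁, ⟨hfg₁, hsp₁⟩, hinf₁⟩ := h₁
  obtain ⟨Γ₂, ⟨hfg₂, hsp₂⟩, hinf₂⟩ := h₂
  obtain ⟨u₁, hu₁⟩ := subring_exists_unit hfg₁ hinf₁
  obtain ⟨u₂, hu₂⟩ := subring_exists_unit hfg₂ hinf₂
  have horder : IsZOrder (A₁ × A₂) (Γ₁.prod Γ₂) := by
    constructor
    · have e : (Γ₁.prod Γ₂).toAddSubgroup =
          ((AddSubgroup.toIntSubmodule Γ₁.toAddSubgroup).prod
            (AddSubgroup.toIntSubmodule Γ₂.toAddSubgroup)).toAddSubgroup := by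
        ext x
        simp [Subring.mem_prod, Submodule.mem_prod, ← SetLike.mem_coe,
          AddSubgroup.coe_toIntSubmodule, Subring.coe_prod, Set.mem_prod]
      rw [e, ← Submodule.fg_iff_addSubgroup_fg]
      refine Submodule.FG.prod ?_ ?_
      · rw [Submodule.fg_iff_addSubgroup_fg, AddSubgroup.toIntSubmodule_toAddSubgroup]
        exact hfg₁
      · rw [Submodule.fg_iff_addSubgroup_fg, AddSubgroup.toIntSubmodule_toAddSubgroup]
        exact hfg₂
    · rw [eq_top_iff]
      rintro ⟨x, y⟩ -
      have hx : x ∈ Submodule.span ℚ (Γ₁ : Set A₁) := by rw [hsp₁]; trivial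
      have hy : y ∈ Submodule.span ℚ (Γ₂ : Set A₂) := by rw [hsp₂]; trivial
      have hx' : ((x, 0) : A₁ × A₂) ∈ Submodule.span ℚ ((Γ₁.prod Γ₂ : Subring (A₁ × A₂)) : Set (A₁ × A₂)) := by
        have h5 : ((x, 0) : A₁ × A₂) ∈ Submodule.map (LinearMap.inl ℚ A₁ A₂)
            (Submodule.span ℚ (Γ₁ : Set A₁)) := ⟨x, hx, rfl⟩
        rw [Submodule.map_span] at h5
        refine Submodule.span_mono ?_ h5
        rintro _ ⟨a, ha, rfl⟩
        simp only [LinearMap.coe_inl, SetLike.mem_coe, Subring.mem_prod]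
        exact ⟨ha, Γ₂.zero_mem⟩
      have hy' : ((0, y) : A₁ × A₂) ∈ Submodule.span ℚ ((Γ₁.prod Γ₂ : Subring (A₁ × A₂)) : Set (A₁ × A₂)) := by
        have h5 : ((0, y) : A₁ × A₂) ∈ Submodule.map (LinearMap.inr ℚ A₁ A₂)
            (Submodule.span ℚ (Γ₂ : Set A₂)) := ⟨y, hy, rfl⟩
        rw [Submodule.map_span] at h5
        refine Submodule.span_mono ?_ h5
        rintro _ ⟨a, ha, rfl⟩
        simp only [LinearMap.coe_inr, SetLike.mem_coe, Subring.mem_prod]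
        exact ⟨Γ₁.zero_mem, ha⟩
      have hxy : ((x, y) : A₁ × A₂) = ((x, 0) : A₁ × A₂) + ((0, y) : A₁ × A₂) := by simp
      rw [hxy]
      exact add_mem hx' hy'
  have hz : HasZxZ (Γ₁.prod Γ₂)ˣ := by
    let e1 : Γ₁ˣ × Γ₂ˣ ≃* (Γ₁ × Γ₂)ˣ := MulEquiv.prodUnits.symm
    let e2 : (Γ₁ × Γ₂)ˣ ≃* (Γ₁.prod Γ₂)ˣ :=
      Units.mapEquiv (Subring.prodEquiv Γ₁ Γ₂).symm.toMulEquiv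
    let g : Multiplicative (ℤ × ℤ) →* Γ₁ˣ × Γ₂ˣ :=
      { toFun := fun z => (u₁ ^ (Multiplicative.toAdd z).1, u₂ ^ (Multiplicative.toAdd z).2)
        map_one' := by simp
        map_mul' := by
          intro z w
          simp [toAdd_mul, Prod.fst_add, Prod.snd_add, zpow_add, Prod.mk_mul_mk] }
    have hginj : Function.Injective g := by
      intro z w hzw
      have hg1 : u₁ ^ (Multiplicative.toAdd z).1 = u₁ ^ (Multiplicative.toAdd w).1 :=
        congrArg Prod.fst hzw
      have hg2 : u₂ ^ (Multiplicative.toAdd z).2 = u₂ ^ (Multiplicative.toAdd w).2 :=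
        congrArg Prod.snd hzw
      have i1 := (injective_zpow_iff_not_isOfFinOrder.mpr hu₁) hg1
      have i2 := (injective_zpow_iff_not_isOfFinOrder.mpr hu₂) hg2
      have : Multiplicative.toAdd z = Multiplicative.toAdd w := Prod.ext i1 i2
      exact Multiplicative.toAdd.injective this
    exact ⟨e2.toMonoidHom.comp (e1.toMonoidHom.comp g),
      e2.injective.comp (e1.injective.comp hginj)⟩
  exact ⟨fun H => H (Γ₁.prod Γ₂) horder hz, ⟨Γ₁.prod Γ₂, horder, hz⟩⟩
end

section
/- The algebra T₂(ℚ) of upper triangular 2×2 matrices over ℚ has the hyperbolic property: for every ℤ-order Γ in T₂(ℚ), the unit group Γˣ contains no subgroup isomorphic to ℤ × ℤ. -/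
set_option maxHeartbeats 1000000
set_option synthInstance.maxHeartbeats 1000000


/-- The `ℚ`-algebra of upper triangular `2 × 2` matrices over `ℚ`. -/
def T2Q : Subalgebra ℚ (Matrix (Fin 2) (Fin 2) ℚ) where
  carrier := {M | M 1 0 = 0}
  mul_mem' := by
    intro a b ha hb
    simp only [Set.mem_setOf_eq] at *
    simp [Matrix.mul_apply, Fin.sum_univ_two, ha, hb]
  add_mem' := by
    intro a b ha hb
    simp only [Set.mem_setOf_eq] at *
    simp [ha, hb]
  algebraMap_mem' := by
    intro q
    simp [Matrix.algebraMap_eq_diagonal, Matrix.diagonal]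

lemma T2Q_lower (x : T2Q) : (x : Matrix (Fin 2) (Fin 2) ℚ) 1 0 = 0 := x.2

lemma T2Q_mul_coe (x y : T2Q) :
    ((x * y : T2Q) : Matrix (Fin 2) (Fin 2) ℚ)
      = (x : Matrix (Fin 2) (Fin 2) ℚ) * (y : Matrix (Fin 2) (Fin 2) ℚ) := rfl

def e00 : T2Q →+* ℚ where
  toFun x := (x : Matrix (Fin 2) (Fin 2) ℚ) 0 0
  map_one' := rfl
  map_mul' x y := by
    have h := T2Q_lower y
    show ((x : Matrix (Fin 2) (Fin 2) ℚ) * (y : Matrix (Fin 2) (Fin 2) ℚ)) 0 0 = _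
    simp [Matrix.mul_apply, Fin.sum_univ_two, h]
  map_zero' := rfl
  map_add' x y := rfl

def e11 : T2Q →+* ℚ where
  toFun x := (x : Matrix (Fin 2) (Fin 2) ℚ) 1 1
  map_one' := rfl
  map_mul' x y := by
    have h := T2Q_lower x
    show ((x : Matrix (Fin 2) (Fin 2) ℚ) * (y : Matrix (Fin 2) (Fin 2) ℚ)) 1 1 = _
    simp [Matrix.mul_apply, Fin.sum_univ_two, h]
  map_zero' := rfl
  map_add' x y := rfl

lemma entry01_mul (x y : T2Q) :
    ((x * y : T2Q) : Matrix (Fin 2) (Fin 2) ℚ) 0 1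
      = e00 x * ((y : Matrix (Fin 2) (Fin 2) ℚ) 0 1)
        + ((x : Matrix (Fin 2) (Fin 2) ℚ) 0 1) * e11 y := by
  rw [T2Q_mul_coe]
  simp [Matrix.mul_apply, Fin.sum_univ_two, e00, e11]
  rfl

lemma den_mul_self (b : ℚ) : (b.den : ℚ) * b = b.num := by
  rw [mul_comm]
  nth_rewrite 1 [← Rat.num_div_den b]
  rw [div_mul_cancel₀]
  exact_mod_cast b.den_nz

lemma uni_mul_mat (x y : T2Q) (hx0 : e00 x = 1) (hx1 : e11 x = 1)
    (hy0 : e00 y = 1) (hy1 : e11 y = 1) :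
    (x : Matrix (Fin 2) (Fin 2) ℚ) * (y : Matrix (Fin 2) (Fin 2) ℚ)
      = Matrix.of ![![1, (x : Matrix (Fin 2) (Fin 2) ℚ) 0 1
          + (y : Matrix (Fin 2) (Fin 2) ℚ) 0 1], ![0, 1]] := by
  have hx0' : (x : Matrix (Fin 2) (Fin 2) ℚ) 0 0 = 1 := hx0
  have hx1' : (x : Matrix (Fin 2) (Fin 2) ℚ) 1 1 = 1 := hx1
  have hy0' : (y : Matrix (Fin 2) (Fin 2) ℚ) 0 0 = 1 := hy0
  have hy1' : (y : Matrix (Fin 2) (Fin 2) ℚ) 1 1 = 1 := hy1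
  have hx2 := T2Q_lower x
  have hy2 := T2Q_lower y
  funext i j
  fin_cases i <;> fin_cases j <;>
    simp [Matrix.mul_apply, Fin.sum_univ_two, hx0', hx1', hy0', hy1', hx2, hy2] <;> ring

lemma entry_int (Γ : Subring T2Q) (hfg : Γ.toAddSubgroup.FG)
    (e : T2Q →+* ℚ) (x : T2Q) (hx : x ∈ Γ) : ∃ k : ℤ, (k : ℚ) = e x := by
  have hint : IsIntegral ℤ x := by
    refine IsIntegral.of_mem_of_fg (subalgebraOfSubring Γ) ?_ x hx
    rw [Submodule.fg_iff_addSubgroup_fg]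
    exact hfg
  have h2 : IsIntegral ℤ (e x) := hint.map e.toIntAlgHom
  exact IsIntegrallyClosed.isIntegral_iff.mp h2

lemma unit_sq_diag (Γ : Subring T2Q) (hfg : Γ.toAddSubgroup.FG)
    (e : T2Q →+* ℚ) (u : Γˣ) :
    e ((((u ^ 2 : Γˣ) : Γ)) : T2Q) = 1 := by
  obtain ⟨k, hk⟩ := entry_int Γ hfg e ((u : Γ) : T2Q) (u : Γ).2
  obtain ⟨l, hl⟩ := entry_int Γ hfg e (((u⁻¹ : Γˣ) : Γ) : T2Q) ((u⁻¹ : Γˣ) : Γ).2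
  have hmul : ((u : Γ) : T2Q) * (((u⁻¹ : Γˣ) : Γ) : T2Q) = 1 := by
    have : ((u : Γ) * ((u⁻¹ : Γˣ) : Γ) : Γ) = 1 := by
      exact_mod_cast u.mul_inv
    exact_mod_cast congrArg (Subtype.val) this
  have h1 : e ((u : Γ) : T2Q) * e (((u⁻¹ : Γˣ) : Γ) : T2Q) = 1 := by
    rw [← map_mul, hmul, map_one]
  have hkl : k * l = 1 := by
    have : ((k * l : ℤ) : ℚ) = ((1 : ℤ) : ℚ) := by push_cast; rw [hk, hl, h1]
    exact_mod_cast this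
  have hk1 : k = 1 ∨ k = -1 := Int.isUnit_iff.mp (IsUnit.of_mul_eq_one l hkl)
  have hpow : (((u ^ 2 : Γˣ) : Γ) : T2Q) = ((u : Γ) : T2Q) * ((u : Γ) : T2Q) := by
    have : ((u ^ 2 : Γˣ) : Γ) = (u : Γ) * (u : Γ) := by rw [sq]; rfl
    rw [this]; rfl
  rw [hpow, map_mul, ← hk]
  rcases hk1 with h | h <;> rw [h] <;> norm_num

lemma unipotent_pow (Γ : Subring T2Q) (w : Γˣ)
    (h0 : e00 (((w : Γ)) : T2Q) = 1) (h1 : e11 (((w : Γ)) : T2Q) = 1) (k : ℕ) :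
    e00 ((((w ^ k : Γˣ) : Γ)) : T2Q) = 1 ∧ e11 ((((w ^ k : Γˣ) : Γ)) : T2Q) = 1 ∧
      ((((w ^ k : Γˣ) : Γ) : T2Q) : Matrix (Fin 2) (Fin 2) ℚ) 0 1
        = k * (((w : Γ) : T2Q) : Matrix (Fin 2) (Fin 2) ℚ) 0 1 := by
  induction k with
  | zero =>
    refine ⟨by simp, by simp, ?_⟩
    have : (((w ^ 0 : Γˣ) : Γ) : T2Q) = 1 := by norm_num
    rw [this]
    simp [Matrix.one_apply]
  | succ n ih =>
    obtain ⟨ih0, ih1, ih01⟩ := ih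
    have hco : (((w ^ (n + 1) : Γˣ) : Γ) : T2Q)
        = (((w ^ n : Γˣ) : Γ) : T2Q) * (((w : Γ)) : T2Q) := by
      rw [pow_succ]; rfl
    refine ⟨?_, ?_, ?_⟩
    · rw [hco, map_mul, ih0, h0, mul_one]
    · rw [hco, map_mul, ih1, h1, mul_one]
    · rw [hco, entry01_mul, ih0, ih01, h1]
      push_cast
      ring

theorem upper_triangular_2x2_hyperbolic : HasHyperbolicProperty T2Q := by
  rintro Γ ⟨hfg, -⟩ ⟨f, hf⟩
  set u : Γˣ := f (Multiplicative.ofAdd (1, 0)) with hu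
  set v : Γˣ := f (Multiplicative.ofAdd (0, 1)) with hv
  set w₁ : Γˣ := u ^ 2 with hw₁
  set w₂ : Γˣ := v ^ 2 with hw₂
  have h10 : e00 (((w₁ : Γ)) : T2Q) = 1 := unit_sq_diag Γ hfg e00 u
  have h11 : e11 (((w₁ : Γ)) : T2Q) = 1 := unit_sq_diag Γ hfg e11 u
  have h20 : e00 (((w₂ : Γ)) : T2Q) = 1 := unit_sq_diag Γ hfg e00 v
  have h21 : e11 (((w₂ : Γ)) : T2Q) = 1 := unit_sq_diag Γ hfg e11 v
  set β : ℚ := (((w₁ : Γ) : T2Q) : Matrix (Fin 2) (Fin 2) ℚ) 0 1 with hβ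
  set γ : ℚ := (((w₂ : Γ) : T2Q) : Matrix (Fin 2) (Fin 2) ℚ) 0 1 with hγ
  -- find a nonzero integer relation p * β + q * γ = 0
  obtain ⟨p, q, hpq, hrel⟩ : ∃ p q : ℤ, ¬(p = 0 ∧ q = 0) ∧ (p : ℚ) * β + (q : ℚ) * γ = 0 := by
    by_cases hb : β = 0
    · exact ⟨1, 0, by simp, by simp [hb]⟩
    · refine ⟨γ.num * β.den, -(β.num * γ.den), ?_, ?_⟩
      · intro ⟨_, h2⟩
        have hβn : β.num ≠ 0 := Rat.num_ne_zero.mpr hb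
        have : (γ.den : ℤ) ≠ 0 := by exact_mod_cast γ.pos.ne'
        exact (mul_ne_zero hβn this) (by omega)
      · have hbd := den_mul_self β
        have hgd := den_mul_self γ
        push_cast
        linear_combination (γ.num : ℚ) * hbd - (β.num : ℚ) * hgd
  -- split p, q into positive and negative parts
  set np := p.toNat with hnp
  set nn := (-p).toNat with hnn
  set mp := q.toNat with hmp
  set mn := (-q).toNat with hmn
  have hp : (np : ℤ) - (nn : ℤ) = p := by omega
  have hq : (mp : ℤ) - (mn : ℤ) = q := by omega
  -- the two unipotent products are equal
  have key : w₁ ^ np * w₂ ^ mp = w₁ ^ nn * w₂ ^ mn := by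
    obtain ⟨a0, a1, a01⟩ := unipotent_pow Γ w₁ h10 h11 np
    obtain ⟨b0, b1, b01⟩ := unipotent_pow Γ w₂ h20 h21 mp
    obtain ⟨c0, c1, c01⟩ := unipotent_pow Γ w₁ h10 h11 nn
    obtain ⟨d0, d1, d01⟩ := unipotent_pow Γ w₂ h20 h21 mn
    have hL' : ((((w₁ ^ np * w₂ ^ mp : Γˣ) : Γ)) : T2Q).val
        = (((w₁ ^ np : Γˣ) : Γ) : T2Q).val * (((w₂ ^ mp : Γˣ) : Γ) : T2Q).val := rfl
    have hR' : ((((w₁ ^ nn * w₂ ^ mn : Γˣ) : Γ)) : T2Q).val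
        = (((w₁ ^ nn : Γˣ) : Γ) : T2Q).val * (((w₂ ^ mn : Γˣ) : Γ) : T2Q).val := rfl
    refine Units.ext (Subtype.ext (Subtype.ext ?_))
    rw [hL', hR', uni_mul_mat _ _ a0 a1 b0 b1, uni_mul_mat _ _ c0 c1 d0 d1,
      a01, b01, c01, d01]
    have : (np : ℚ) * β + (mp : ℚ) * γ = (nn : ℚ) * β + (mn : ℚ) * γ := by
      have e1 : ((np : ℚ) - nn) = (p : ℚ) := by exact_mod_cast congrArg (fun z : ℤ => (z : ℚ)) hp
      have e2 : ((mp : ℚ) - mn) = (q : ℚ) := by exact_mod_cast congrArg (fun z : ℤ => (z : ℚ)) hq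
      have := hrel
      rw [← e1, ← e2] at this
      linarith
    rw [← hβ, ← hγ, this]
  -- transport back through f and use injectivity
  have expand : ∀ a b : ℕ, w₁ ^ a * w₂ ^ b
      = f (Multiplicative.ofAdd ((2 * a : ℤ), (2 * b : ℤ))) := by
    intro a b
    rw [hw₁, hw₂, hu, hv, ← pow_mul, ← pow_mul, ← map_pow f, ← map_pow f, ← map_mul f]
    congr 1
    rw [← ofAdd_nsmul, ← ofAdd_nsmul, ← ofAdd_add]
    congr 1
    simp only [Prod.smul_mk, Prod.mk_add_mk, Prod.mk.injEq, smul_zero, nsmul_eq_mul,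
      Nat.cast_mul, Nat.cast_ofNat]
    constructor <;> push_cast <;> ring
  rw [expand np mp, expand nn mn] at key
  have := hf key
  have h2 : ((2 * (np : ℤ), 2 * (mp : ℤ)) : ℤ × ℤ) = (2 * (nn : ℤ), 2 * (mn : ℤ)) := by
    exact_mod_cast congrArg Multiplicative.toAdd this
  rw [Prod.ext_iff] at h2
  obtain ⟨h2a, h2b⟩ := h2
  apply hpq
  omega
end

section
/- Let G be a finite group, m ≥ 1, n ≥ 2, and let P be a regular n×m sandwich matrix with entries in G ∪ {θ} with P_{1,1} = 1 (the identity of G). Let S = M⁰(G; m, n; P) and for each g ∈ G set a_g = (g·P_{2,1}, 1, 1) if P_{2,1} ∈ G (and a_g = 0 in ℚ₀S if P_{2,1} = θ) and b_g = (g, 1, 2). Then in the contracted semigroup algebra ℚ₀S one has (a_g − b_g)² = 0 for every g ∈ G, and the family {a_g − b_g : g ∈ G} is linearly independent over ℚ. -/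
/-- The multiplication of the contracted semigroup algebra `ℚ₀S` of a Rees matrix
semigroup `S = M⁰(G; m, n; P)` with sandwich matrix `P : Fin n → Fin m → Option G`
(`none` playing the role of the zero symbol `θ`): the `ℚ`-vector space with basis
the nonzero elements `(g, i, j)` of `S`, with multiplication induced bilinearly from
`(g, i, j)·(h, k, l) = (g·P_{j,k}·h, i, l)` if `P_{j,k} ∈ G` and `0` if `P_{j,k} = θ`. -/
noncomputable def reesMul {G : Type*} [Group G] {m n : ℕ}
    (P : Fin n → Fin m → Option G)
    (x y : (G × Fin m × Fin n) →₀ ℚ) : (G × Fin m × Fin n) →₀ ℚ :=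
  x.sum fun a c => y.sum fun b d =>
    (P a.2.2 b.2.1).elim 0 fun p =>
      Finsupp.single (a.1 * p * b.1, (a.2.1, b.2.2)) (c * d)

/-- The element `a_g = (g·P_{2,1}, 1, 1)` of `ℚ₀S` (equal to `0` if `P_{2,1} = θ`). -/
noncomputable def reesA {G : Type*} [Group G] {m n : ℕ} (hm : 1 ≤ m) (hn : 2 ≤ n)
    (P : Fin n → Fin m → Option G) (g : G) : (G × Fin m × Fin n) →₀ ℚ :=
  (P ⟨1, by omega⟩ ⟨0, by omega⟩).elim 0 fun p =>
    Finsupp.single (g * p, (⟨0, by omega⟩, ⟨0, by omega⟩)) 1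

/-- The element `b_g = (g, 1, 2)` of `ℚ₀S`. -/
noncomputable def reesB {G : Type*} [Group G] {m n : ℕ} (hm : 1 ≤ m) (hn : 2 ≤ n)
    (g : G) : (G × Fin m × Fin n) →₀ ℚ :=
  Finsupp.single (g, (⟨0, by omega⟩, ⟨1, by omega⟩)) 1

section Aux

variable {G : Type*} [Group G] {m n : ℕ}

lemma reesMul_zero_left (P : Fin n → Fin m → Option G) (y : (G × Fin m × Fin n) →₀ ℚ) :
    reesMul P 0 y = 0 := by
  simp [reesMul]

lemma reesMul_zero_right (P : Fin n → Fin m → Option G) (x : (G × Fin m × Fin n) →₀ ℚ) :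
    reesMul P x 0 = 0 := by
  simp [reesMul]

lemma reesMul_single_single (P : Fin n → Fin m → Option G) (a b : G × Fin m × Fin n) (c d : ℚ) :
    reesMul P (Finsupp.single a c) (Finsupp.single b d) =
      (P a.2.2 b.2.1).elim 0 fun p =>
        Finsupp.single (a.1 * p * b.1, (a.2.1, b.2.2)) (c * d) := by
  unfold reesMul
  rw [Finsupp.sum_single_index, Finsupp.sum_single_index]
  · cases P a.2.2 b.2.1 <;> simp
  · rw [Finsupp.sum_single_index] <;> cases P a.2.2 b.2.1 <;> simp

lemma reesMul_sub_left (P : Fin n → Fin m → Option G) (x x' y : (G × Fin m × Fin n) →₀ ℚ) :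
    reesMul P (x - x') y = reesMul P x y - reesMul P x' y := by
  unfold reesMul
  apply Finsupp.sum_sub_index
  intro a c c'
  rw [← Finsupp.sum_sub]
  refine Finsupp.sum_congr fun b _ => ?_
  cases P a.2.2 b.2.1 <;> simp [sub_mul, Finsupp.single_sub]

lemma reesMul_sub_right (P : Fin n → Fin m → Option G) (x y y' : (G × Fin m × Fin n) →₀ ℚ) :
    reesMul P x (y - y') = reesMul P x y - reesMul P x y' := by
  unfold reesMul
  rw [← Finsupp.sum_sub]
  refine Finsupp.sum_congr fun a _ => ?_
  apply Finsupp.sum_sub_index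
  intro b d d'
  cases P a.2.2 b.2.1 <;> simp [mul_sub, Finsupp.single_sub]

end Aux

theorem rees_nilpotents_linearly_independent
    (G : Type*) [Group G] [Finite G] (m n : ℕ) (hm : 1 ≤ m) (hn : 2 ≤ n)
    (P : Fin n → Fin m → Option G)
    (hrow : ∀ i, ∃ j, P i j ≠ none) (hcol : ∀ j, ∃ i, P i j ≠ none)
    (hP11 : P ⟨0, by omega⟩ ⟨0, by omega⟩ = some 1) :
    (∀ g : G,
      reesMul P (reesA hm hn P g - reesB hm hn g) (reesA hm hn P g - reesB hm hn g) = 0) ∧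
    LinearIndependent ℚ (fun g : G => reesA hm hn P g - reesB hm hn g) := by
  constructor
  · intro g
    rw [reesMul_sub_left, reesMul_sub_right, reesMul_sub_right]
    cases hp : P ⟨1, by omega⟩ ⟨0, by omega⟩ with
    | none =>
      simp only [reesA, reesB, hp, Option.elim_none]
      simp [reesMul_zero_left, reesMul_zero_right, reesMul_single_single, hp]
    | some p =>
      simp only [reesA, reesB, hp, Option.elim_some]
      rw [reesMul_single_single, reesMul_single_single, reesMul_single_single,
        reesMul_single_single]
      simp [hP11, hp]
  · classical
    have : Fintype G := Fintype.ofFinite G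
    rw [Fintype.linearIndependent_iff]
    intro c hc g
    have h2 := congrArg (fun x : (G × Fin m × Fin n) →₀ ℚ =>
      x (g, (⟨0, by omega⟩, ⟨1, by omega⟩))) hc
    have ha : ∀ h : G, (reesA hm hn P h) (g, (⟨0, by omega⟩, ⟨1, by omega⟩)) = 0 := by
      intro h
      unfold reesA
      cases P ⟨1, by omega⟩ ⟨0, by omega⟩ <;>
        simp [Finsupp.single_apply, Prod.ext_iff, Fin.ext_iff]
    simpa [Finsupp.finset_sum_apply, reesB, ha, Finsupp.single_apply,
      Finset.sum_ite_eq'] using h2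
end
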